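/- Let K be an infinite field, m = 2, n = 3, V = K^4. Then the element α := (1+s_1)(1+s_2+s_2s_1) + (1+s_2+s_1s_2)e_1(1+s_2+s_2s_1) of the Brauer algebra B_3(−4) lies in the kernel of φ : B_3(−4) → End_K(V^{⊗3}), and moreover ker(φ) = K·α is one-dimensional. -/

import Mathlib

open scoped BigOperators Classical
open MulOpposite

noncomputable section

namespace SpBrauer

/-- the conjugate index `i' = 2m-1-i` (0-based version of `2m+1-i`). -/
def conjIdx (m : ℕ) (i : Fin (2*m)) : Fin (2*m) :=
  ⟨2*m - 1 - (i : ℕ), by have := i.isLt; omega⟩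

/-- the sign `ε_{ij}`. -/
def epsZ (m : ℕ) (i j : Fin (2*m)) : ℤ :=
  if (i : ℕ) + (j : ℕ) + 1 = 2*m then (if (i : ℕ) < (j : ℕ) then 1 else -1) else 0

/-- tensor space `V^{⊗ n}` modelled as the free module on multi-indices. -/
abbrev Ten (R : Type) (m n : ℕ) : Type := (Fin n → Fin (2*m)) → R

/-- basis tensor `v_{i_1} ⊗ ⋯ ⊗ v_{i_n}`. -/
def dta (R : Type) [CommRing R] (m n : ℕ) (i : Fin n → Fin (2*m)) : Ten R m n :=
  fun a => if a = i then 1 else 0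

/-- the linear map on free modules with "matrix" `M`. -/
def funMap (R : Type) [CommRing R] (α β : Type) [Fintype α]
    (M : β → α → R) : (α → R) →ₗ[R] (β → R) where
  toFun f := fun b => ∑ a, M b a * f a
  map_add' f g := by
    funext b
    simp [Pi.add_apply, mul_add, Finset.sum_add_distrib]
  map_smul' c f := by
    funext b
    simp only [Pi.smul_apply, smul_eq_mul, RingHom.id_apply]
    rw [Finset.mul_sum]
    exact Finset.sum_congr rfl (fun a _ => by ring)

/-- the operator given by the right action of the Brauer algebra generator `s_j`
(`j` is 0-based: `s_j` swaps positions `j` and `j+1` with a sign). -/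
def sOp (R : Type) [CommRing R] (m n : ℕ) (j : Fin (n-1)) :
    Ten R m n →ₗ[R] Ten R m n :=
  funMap R _ _ (fun a b =>
    if b = a ∘ (Equiv.swap (⟨(j:ℕ), by have := j.isLt; omega⟩ : Fin n)
        (⟨(j:ℕ)+1, by have := j.isLt; omega⟩ : Fin n)) then -1 else 0)

/-- the operator given by the right action of the Brauer algebra generator `e_j`. -/
def eOp (R : Type) [CommRing R] (m n : ℕ) (j : Fin (n-1)) :
    Ten R m n →ₗ[R] Ten R m n :=
  funMap R _ _ (fun a b =>
    (if ∀ p : Fin n, p ≠ (⟨(j:ℕ), by have := j.isLt; omega⟩ : Fin n) →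
        p ≠ (⟨(j:ℕ)+1, by have := j.isLt; omega⟩ : Fin n) → b p = a p then 1 else 0) *
    (-((epsZ m (a ⟨(j:ℕ), by have := j.isLt; omega⟩) (a ⟨(j:ℕ)+1, by have := j.isLt; omega⟩) : ℤ) : R)) *
    ((epsZ m (b ⟨(j:ℕ), by have := j.isLt; omega⟩) (b ⟨(j:ℕ)+1, by have := j.isLt; omega⟩) : ℤ) : R))

/-- the (sign-twisted) right place-permutation action of a permutation on tensor space. -/
def permOp (R : Type) [CommRing R] (m n : ℕ) (π : Equiv.Perm (Fin n)) :
    Ten R m n →ₗ[R] Ten R m n :=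
  funMap R _ _ (fun a b => if b = a ∘ π then ((Equiv.Perm.sign π : ℤ) : R) else 0)

/-- the `n`-fold tensor power of (the endomorphism of `V` given by) a matrix `g`,
acting diagonally on tensor space. -/
def tenOp (R : Type) [CommRing R] (m n : ℕ) (g : Matrix (Fin (2*m)) (Fin (2*m)) R) :
    Ten R m n →ₗ[R] Ten R m n :=
  funMap R _ _ (fun a b => ∏ k : Fin n, g (a k) (b k))

/-- the skew-symmetric bilinear form `(v,w)` determined by `(v_i, v_j) = ε_{ij}`. -/
def sform (R : Type) [CommRing R] (m : ℕ) (v w : Fin (2*m) → R) : R :=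
  ∑ i, ∑ j, v i * ((epsZ m i j : ℤ) : R) * w j

/-- membership in the symplectic group `Sp(V)` (an invertible linear map preserving the form). -/
def IsSymp (R : Type) [CommRing R] (m : ℕ) (g : Matrix (Fin (2*m)) (Fin (2*m)) R) : Prop :=
  IsUnit g.det ∧ ∀ v w, sform R m (g.mulVec v) (g.mulVec w) = sform R m v w

/-- membership in the symplectic similitude group `GSp(V)`. -/
def IsGSymp (R : Type) [CommRing R] (m : ℕ) (g : Matrix (Fin (2*m)) (Fin (2*m)) R) : Prop :=
  IsUnit g.det ∧ ∃ d : R, d ≠ 0 ∧ ∀ v w, sform R m (g.mulVec v) (g.mulVec w) = d * sform R m v w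

/-! ### The Brauer algebra, by generators and relations -/

/-- generators of the Brauer algebra `B_n(x)`:  `s i` and `e i` for `i = 0, …, n-2`
(0-based versions of `s_1, …, s_{n-1}`, `e_1, …, e_{n-1}`). -/
inductive BGen (n : ℕ) : Type
  | s : Fin (n-1) → BGen n
  | e : Fin (n-1) → BGen n

/-- the defining relations of the Brauer algebra `B_n(x)`. -/
inductive BRel (R : Type) [CommRing R] (x : R) (n : ℕ) :
    FreeAlgebra R (BGen n) → FreeAlgebra R (BGen n) → Prop
  | ss (i : Fin (n-1)) :
      BRel R x n (FreeAlgebra.ι R (BGen.s i) * FreeAlgebra.ι R (BGen.s i)) 1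
  | ee (i : Fin (n-1)) :
      BRel R x n (FreeAlgebra.ι R (BGen.e i) * FreeAlgebra.ι R (BGen.e i))
        (x • FreeAlgebra.ι R (BGen.e i))
  | es (i : Fin (n-1)) :
      BRel R x n (FreeAlgebra.ι R (BGen.e i) * FreeAlgebra.ι R (BGen.s i))
        (FreeAlgebra.ι R (BGen.e i))
  | se (i : Fin (n-1)) :
      BRel R x n (FreeAlgebra.ι R (BGen.s i) * FreeAlgebra.ι R (BGen.e i))
        (FreeAlgebra.ι R (BGen.e i))
  | ssComm (i j : Fin (n-1)) (h : (i:ℕ)+1 < (j:ℕ)) :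
      BRel R x n (FreeAlgebra.ι R (BGen.s i) * FreeAlgebra.ι R (BGen.s j))
        (FreeAlgebra.ι R (BGen.s j) * FreeAlgebra.ι R (BGen.s i))
  | seComm (i j : Fin (n-1)) (h : (i:ℕ)+1 < (j:ℕ)) :
      BRel R x n (FreeAlgebra.ι R (BGen.s i) * FreeAlgebra.ι R (BGen.e j))
        (FreeAlgebra.ι R (BGen.e j) * FreeAlgebra.ι R (BGen.s i))
  | eeComm (i j : Fin (n-1)) (h : (i:ℕ)+1 < (j:ℕ)) :
      BRel R x n (FreeAlgebra.ι R (BGen.e i) * FreeAlgebra.ι R (BGen.e j))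
        (FreeAlgebra.ι R (BGen.e j) * FreeAlgebra.ι R (BGen.e i))
  | braid (i j : Fin (n-1)) (h : (j:ℕ) = (i:ℕ)+1) :
      BRel R x n
        (FreeAlgebra.ι R (BGen.s i) * FreeAlgebra.ι R (BGen.s j) * FreeAlgebra.ι R (BGen.s i))
        (FreeAlgebra.ι R (BGen.s j) * FreeAlgebra.ι R (BGen.s i) * FreeAlgebra.ι R (BGen.s j))
  | eje (i j : Fin (n-1)) (h : (j:ℕ) = (i:ℕ)+1) :
      BRel R x n
        (FreeAlgebra.ι R (BGen.e i) * FreeAlgebra.ι R (BGen.e j) * FreeAlgebra.ι R (BGen.e i))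
        (FreeAlgebra.ι R (BGen.e i))
  | eje' (i j : Fin (n-1)) (h : (j:ℕ) = (i:ℕ)+1) :
      BRel R x n
        (FreeAlgebra.ι R (BGen.e j) * FreeAlgebra.ι R (BGen.e i) * FreeAlgebra.ι R (BGen.e j))
        (FreeAlgebra.ι R (BGen.e j))
  | see (i j : Fin (n-1)) (h : (j:ℕ) = (i:ℕ)+1) :
      BRel R x n
        (FreeAlgebra.ι R (BGen.s i) * FreeAlgebra.ι R (BGen.e j) * FreeAlgebra.ι R (BGen.e i))
        (FreeAlgebra.ι R (BGen.s j) * FreeAlgebra.ι R (BGen.e i))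
  | ees (i j : Fin (n-1)) (h : (j:ℕ) = (i:ℕ)+1) :
      BRel R x n
        (FreeAlgebra.ι R (BGen.e j) * FreeAlgebra.ι R (BGen.e i) * FreeAlgebra.ι R (BGen.s j))
        (FreeAlgebra.ι R (BGen.e j) * FreeAlgebra.ι R (BGen.s i))

/-- the Brauer algebra `B_n(x)` over `R`, presented by generators and relations. -/
abbrev BrauerAlg (R : Type) [CommRing R] (x : R) (n : ℕ) : Type := RingQuot (BRel R x n)

/-- the generator `s_i` of the Brauer algebra (0-based index). -/
def bS (R : Type) [CommRing R] (x : R) (n : ℕ) (i : Fin (n-1)) : BrauerAlg R x n :=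
  RingQuot.mkAlgHom R (BRel R x n) (FreeAlgebra.ι R (BGen.s i))

/-- the generator `e_i` of the Brauer algebra (0-based index). -/
def bE (R : Type) [CommRing R] (x : R) (n : ℕ) (i : Fin (n-1)) : BrauerAlg R x n :=
  RingQuot.mkAlgHom R (BRel R x n) (FreeAlgebra.ι R (BGen.e i))

/-- the element `E_f = e_1 e_3 ⋯ e_{2f-1}` of the Brauer algebra. -/
def EfB (R : Type) [CommRing R] (x : R) (n f : ℕ) (hf : 2*f ≤ n) : BrauerAlg R x n :=
  (List.ofFn (fun i : Fin f => bE R x n ⟨2*(i:ℕ), by have := i.isLt; omega⟩)).prod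

/-- the two-sided ideal `B^{(f)}` of the Brauer algebra generated by `E_f`
(it is `0` when `2f > n`, matching the convention of the paper). -/
def Bideal (R : Type) [CommRing R] (x : R) (n f : ℕ) : Submodule R (BrauerAlg R x n) :=
  Submodule.span R {y | ∃ (hf : 2*f ≤ n) (a b : BrauerAlg R x n), y = a * EfB R x n f hf * b}

/-- the operator on tensor space given by the right action of `E_f = e_1e_3⋯e_{2f-1}`. -/
def EfOp (R : Type) [CommRing R] (m n f : ℕ) (hf : 2*f ≤ n) :
    Module.End R (Ten R m n) :=
  (List.ofFn (fun i : Fin f => eOp R m n ⟨2*(i:ℕ), by have := i.isLt; omega⟩)).prod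

/-! ### Combinatorial predicates -/

/-- `σ ∈ S_{{2f+1, …, n}}`, i.e. `σ` fixes `1, …, 2f` pointwise (0-based). -/
def FixLow (n f : ℕ) (σ : Equiv.Perm (Fin n)) : Prop :=
  ∀ a : Fin n, (a:ℕ) < 2*f → σ a = a

/-- `σ ∈ S_{2f} = S_{{1, …, 2f}}`, i.e. `σ` fixes `2f+1, …, n` pointwise (0-based). -/
def FixHigh (n f : ℕ) (σ : Equiv.Perm (Fin n)) : Prop :=
  ∀ a : Fin n, 2*f ≤ (a:ℕ) → σ a = a

/-- membership in `D_{ν_f}`:  the bitableau `t^{ν_f}·d` is row standard and the first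
column of its first component is increasing (everything 0-based; `d a` is the entry
at the cell of `t^{ν_f}` containing `a`). -/
def DnuP (n f : ℕ) (d : Equiv.Perm (Fin n)) : Prop :=
  (∀ a b : Fin n, (a:ℕ) % 2 = 0 → (b:ℕ) = (a:ℕ)+1 → (b:ℕ) < 2*f → d a < d b) ∧
  (∀ a b : Fin n, (a:ℕ) % 2 = 0 → (b:ℕ) % 2 = 0 → (a:ℕ) < (b:ℕ) → (b:ℕ) < 2*f → d a < d b) ∧
  (∀ a b : Fin n, 2*f ≤ (a:ℕ) → (b:ℕ) = (a:ℕ)+1 → d a < d b)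

/-- membership in `D_f = D_{ν_f} ∩ S_{2f}`. -/
def DfP (n f : ℕ) (d : Equiv.Perm (Fin n)) : Prop :=
  DnuP n f d ∧ FixHigh n f d

/-- membership in the row stabilizer `S_{(2^f)}` of the initial `(2^f)`-tableau
(whose rows are `{1,2}, {3,4}, …, {2f-1,2f}`), inside `S_{2f} ≤ S_n`. -/
def RowStabP (n f : ℕ) (w : Equiv.Perm (Fin n)) : Prop :=
  FixHigh n f w ∧ ∀ a : Fin n, ((w a : ℕ))/2 = (a:ℕ)/2

/-- membership in `Ψ`, the normalizer of `S_{(2^f)}` in `S_{2f}`. -/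
def PsiP (n f : ℕ) (z : Equiv.Perm (Fin n)) : Prop :=
  FixHigh n f z ∧ ∀ w, RowStabP n f w ↔ RowStabP n f (z * w * z⁻¹)

/-- `d_J` for a `2f`-element subset `J ⊆ {1, …, n}`:  the unique permutation
enumerating `J` increasingly on the first `2f` positions and the complement of `J`
increasingly on the remaining positions. -/
def IsdJ (n f : ℕ) (J : Finset (Fin n)) (d : Equiv.Perm (Fin n)) : Prop :=
  (∀ a : Fin n, ((a:ℕ) < 2*f → d a ∈ J) ∧ (2*f ≤ (a:ℕ) → d a ∉ J)) ∧
  (∀ a b : Fin n, (a:ℕ) < (b:ℕ) → (b:ℕ) < 2*f → d a < d b) ∧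
  (∀ a b : Fin n, 2*f ≤ (a:ℕ) → (a:ℕ) < (b:ℕ) → d a < d b)

/-- membership in `S_{(2f, n-2f)} = S_{{1,…,2f}} × S_{{2f+1,…,n}}`. -/
def BlockP (n f : ℕ) (d : Equiv.Perm (Fin n)) : Prop :=
  ∀ a : Fin n, (a:ℕ) < 2*f ↔ ((d a : ℕ)) < 2*f

/-- the multi-index `c = (1, 1', 2, 2', …, f, f')`, completed by an
arbitrary multi-index `kk` on the positions `> 2f`. -/
def cIdx (m n f : ℕ) (hfm : f ≤ m) (kk : Fin n → Fin (2*m)) : Fin n → Fin (2*m) :=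
  fun p => if h : (p:ℕ) < 2*f then
    (if (p:ℕ) % 2 = 0 then (⟨(p:ℕ)/2, by omega⟩ : Fin (2*m))
     else conjIdx m ⟨(p:ℕ)/2, by omega⟩)
  else kk p

/-- the multi-index `ĉ = (f+1, (f+1)', …, 2f, (2f)') ∈ I(2m, 2f)`. -/
def cHatIdx (m f : ℕ) (hfm : 2*f ≤ m) : Fin (2*f) → Fin (2*m) :=
  fun p => if (p:ℕ) % 2 = 0 then (⟨f + (p:ℕ)/2, by have := p.isLt; omega⟩ : Fin (2*m))
           else conjIdx m ⟨f + (p:ℕ)/2, by have := p.isLt; omega⟩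

/-- membership in `I_f` (only the values at positions `> 2f` matter):
`2f+1 ≤ kk p ≤ m` (1-based) for all positions `p > 2f`. -/
def IfP (m n f : ℕ) (kk : Fin n → Fin (2*m)) : Prop :=
  ∀ p : Fin n, 2*f ≤ (p:ℕ) → 2*f ≤ ((kk p : ℕ)) ∧ ((kk p : ℕ)) < m

/-- the weight of a multi-index. -/
def wtOf (m k : ℕ) (a : Fin k → Fin (2*m)) : Fin (2*m) → ℕ :=
  fun j => (Finset.univ.filter (fun p => a p = j)).card

/-- the weight-`μ` component of an element of tensor space. -/
def wcomp (R : Type) [CommRing R] (m k : ℕ) (μ : Fin (2*m) → ℕ) (w : Ten R m k) :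
    Ten R m k :=
  fun a => if wtOf m k a = μ then w a else 0

/-- partial sums of a partition. -/
def psum (l : ℕ → ℕ) (r : ℕ) : ℕ := ∑ i ∈ Finset.range r, l i

/-- `l` represents a partition of `n - 2f` (parts listed weakly decreasingly). -/
def PartP (n f : ℕ) (l : ℕ → ℕ) : Prop :=
  (∀ i, l (i+1) ≤ l i) ∧ psum l n = n - 2*f ∧ ∀ i, n ≤ i → l i = 0

/-- membership in the Young subgroup `S_λ ≤ S_{{2f+1, …, n}}` stabilizing the rows of
the initial `λ`-tableau `t^λ` (with entries `2f+1, …, n`). -/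
def InSlam (n f : ℕ) (l : ℕ → ℕ) (w : Equiv.Perm (Fin n)) : Prop :=
  (∀ a : Fin n, (a:ℕ) < 2*f → w a = a) ∧
  (∀ (a : Fin n) (r : ℕ), 2*f + psum l r ≤ (a:ℕ) → (a:ℕ) < 2*f + psum l (r+1) →
     2*f + psum l r ≤ ((w a : ℕ)) ∧ ((w a : ℕ)) < 2*f + psum l (r+1))

/-- `d = d(t)` for a standard `λ`-tableau `t` with entries `2f+1, …, n`, i.e.
`d ∈ S_{{2f+1,…,n}}` and `t^λ · d` is standard. -/
def StdP (n f : ℕ) (l : ℕ → ℕ) (d : Equiv.Perm (Fin n)) : Prop :=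
  FixLow n f d ∧
  (∀ (a b : Fin n) (r c : ℕ), (a:ℕ) = 2*f + psum l r + c → c+1 < l r →
     (b:ℕ) = (a:ℕ)+1 → d a < d b) ∧
  (∀ (a b : Fin n) (r c : ℕ), (a:ℕ) = 2*f + psum l r + c → c < l (r+1) →
     (b:ℕ) = 2*f + psum l (r+1) + c → d a < d b)

/-- the embedding of the index set of the basis of `V` into that of `Ṽ`
(`v_i ↦ ṽ_i`, `v_{i'} ↦ ṽ_{i'}`). -/
def embIdx (m m0 : ℕ) (h : m ≤ m0) : Fin (2*m) → Fin (2*m0) :=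
  fun j => if (j:ℕ) < m then ⟨(j:ℕ), by have := j.isLt; omega⟩
           else ⟨(j:ℕ) + 2*(m0 - m), by have := j.isLt; omega⟩

/-- the inclusion `V^{⊗n} ↪ Ṽ^{⊗n}`. -/
def inclT (R : Type) [CommRing R] (m m0 n : ℕ) (h : m ≤ m0) :
    Ten R m n →ₗ[R] Ten R m0 n :=
  funMap R _ _ (fun (b : Fin n → Fin (2*m0)) (a : Fin n → Fin (2*m)) =>
    if b = embIdx m m0 h ∘ a then 1 else 0)

/-- the projection `π_K : Ṽ^{⊗n} ↠ V^{⊗n}` killing all basis tensors containing a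
factor `ṽ_i` or `ṽ_{i'}` with `m+1 ≤ i ≤ m_0`. -/
def projT (R : Type) [CommRing R] (m m0 n : ℕ) (h : m ≤ m0) :
    Ten R m0 n →ₗ[R] Ten R m n :=
  funMap R _ _ (fun (a : Fin n → Fin (2*m)) (b : Fin n → Fin (2*m0)) =>
    if b = embIdx m m0 h ∘ a then 1 else 0)


/-- the element `α = (1+s_1)(1+s_2+s_2s_1) + (1+s_2+s_1s_2)e_1(1+s_2+s_2s_1)`
of the Brauer algebra `B_3(-4)` (generators `0`-indexed). -/
def alphaElt (K : Type) [Field K] : BrauerAlg K (-(4 : K)) 3 :=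
  (1 + bS K (-(4:K)) 3 0) *
    (1 + bS K (-(4:K)) 3 1 + bS K (-(4:K)) 3 1 * bS K (-(4:K)) 3 0) +
  (1 + bS K (-(4:K)) 3 1 + bS K (-(4:K)) 3 0 * bS K (-(4:K)) 3 1) * bE K (-(4:K)) 3 0 *
    (1 + bS K (-(4:K)) 3 1 + bS K (-(4:K)) 3 1 * bS K (-(4:K)) 3 0)


/-! ### auxiliary: integer matrices for the 15 basis words -/

abbrev MI : Type := Fin 3 → Fin (2*2)

def swp (j : Fin (3-1)) : Equiv.Perm (Fin 3) :=
  Equiv.swap ⟨(j:ℕ), by have := j.isLt; omega⟩ ⟨(j:ℕ)+1, by have := j.isLt; omega⟩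

def pj (j : Fin (3-1)) : Fin 3 := ⟨(j:ℕ), by have := j.isLt; omega⟩
def pj1 (j : Fin (3-1)) : Fin 3 := ⟨(j:ℕ)+1, by have := j.isLt; omega⟩

def sZ (j : Fin (3-1)) : MI → MI → ℤ := fun c a => if a = c ∘ (swp j) then -1 else 0

def eZ (j : Fin (3-1)) : MI → MI → ℤ := fun c a =>
  (if ∀ p : Fin 3, p ≠ pj j → p ≠ pj1 j → a p = c p then 1 else 0) *
  (-(epsZ 2 (c (pj j)) (c (pj1 j)))) * (epsZ 2 (a (pj j)) (a (pj1 j)))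

def idZ : MI → MI → ℤ := fun c a => if a = c then 1 else 0

def matL (j : Fin (3-1)) (M : MI → MI → ℤ) : MI → MI → ℤ := fun c a => -(M (c ∘ (swp j)) a)
def matR (j : Fin (3-1)) (M : MI → MI → ℤ) : MI → MI → ℤ := fun c a => -(M c (a ∘ (swp j)))

def Wz : Fin 15 → (MI → MI → ℤ) :=
  ![idZ, sZ 0, sZ 1, matL 1 (sZ 0), matL 0 (sZ 1), matL 0 (matL 1 (sZ 0)),
    eZ 0, matL 1 (eZ 0), matL 0 (matL 1 (eZ 0)), matR 1 (eZ 0),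
    matL 1 (matR 1 (eZ 0)), matL 0 (matL 1 (matR 1 (eZ 0))),
    matR 0 (matR 1 (eZ 0)), matL 1 (matR 0 (matR 1 (eZ 0))),
    matL 0 (matL 1 (matR 0 (matR 1 (eZ 0))))]


/-! ### the integer matrix identity -/

lemma pj00 : pj 0 = (0 : Fin 3) := rfl
lemma pj100 : pj1 0 = (1 : Fin 3) := rfl

lemma swp00 : swp 0 (0 : Fin 3) = 1 := by decide
lemma swp01 : swp 0 (1 : Fin 3) = 0 := by decide
lemma swp02 : swp 0 (2 : Fin 3) = 2 := by decide
lemma swp10 : swp 1 (0 : Fin 3) = 0 := by decide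
lemma swp11 : swp 1 (1 : Fin 3) = 2 := by decide
lemma swp12 : swp 1 (2 : Fin 3) = 1 := by decide

lemma funeq3 (f g : MI) : f = g ↔ (f 0 = g 0 ∧ f 1 = g 1 ∧ f 2 = g 2) := by
  constructor
  · rintro rfl; exact ⟨rfl, rfl, rfl⟩
  · rintro ⟨h0, h1, h2⟩
    funext p
    fin_cases p <;> assumption

lemma eZcond0 (P : Fin 3 → Prop) :
    (∀ p : Fin 3, p ≠ 0 → p ≠ 1 → P p) ↔ P 2 := by
  constructor
  · intro h; exact h 2 (by decide) (by decide)
  · intro h p h1 h2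
    fin_cases p
    · exact absurd rfl h1
    · exact absurd rfl h2
    · exact h

set_option maxRecDepth 10000 in
lemma zfact : ∀ c a : MI, (∑ i : Fin 15, Wz i c a) = 0 := by
  intro c a
  simp only [Fin.sum_univ_succ, Fin.sum_univ_zero, Wz, Matrix.cons_val_zero,
    Matrix.cons_val_succ, idZ, sZ, eZ, matL, matR, Function.comp_apply, pj00, pj100,
    funeq3, eZcond0, swp00, swp01, swp02, swp10, swp11, swp12]
  generalize c 0 = x0
  generalize c 1 = x1
  generalize c 2 = x2
  generalize a 0 = y0
  generalize a 1 = y1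
  generalize a 2 = y2
  clear c a
  revert x0 x1 x2 y0 y1 y2
  decide

/-! ### generic funMap lemmas -/

section FM
variable {R : Type} [CommRing R]

lemma funMap_apply {α β : Type} [Fintype α] (M : β → α → R) (f : α → R) (b : β) :
    funMap R α β M f b = ∑ a, M b a * f a := rfl

lemma funMap_comp {α β γ : Type} [Fintype α] [Fintype β]
    (M : γ → β → R) (N : β → α → R) :
    (funMap R β γ M) ∘ₗ (funMap R α β N) = funMap R α γ (fun c a => ∑ b, M c b * N b a) := by
  apply LinearMap.ext; intro f; funext c
  show ∑ b, M c b * (∑ a, N b a * f a) = ∑ a, (∑ b, M c b * N b a) * f a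
  simp_rw [Finset.mul_sum, Finset.sum_mul, mul_assoc]
  rw [Finset.sum_comm]

lemma funMap_dta {m n : ℕ} (M : (Fin n → Fin (2*m)) → (Fin n → Fin (2*m)) → R) (i) :
    funMap R _ _ M (dta R m n i) = fun b => M b i := by
  funext b
  show ∑ a, M b a * (if a = i then 1 else 0) = M b i
  simp [mul_ite, Finset.sum_ite_eq']

lemma funMap_sum {α β : Type} [Fintype α] {ι : Type} (s : Finset ι) (N : ι → β → α → R) :
    ∑ i ∈ s, funMap R α β (N i) = funMap R α β (fun c a => ∑ i ∈ s, N i c a) := by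
  apply LinearMap.ext; intro f; funext c
  rw [LinearMap.sum_apply, Finset.sum_apply]
  show ∑ i ∈ s, (∑ a, N i c a * f a) = ∑ a, (∑ i ∈ s, N i c a) * f a
  simp_rw [Finset.sum_mul]
  rw [Finset.sum_comm]

lemma funMap_zero {α β : Type} [Fintype α] :
    funMap R α β (fun _ _ => 0) = 0 := by
  apply LinearMap.ext; intro f; funext c
  show ∑ a : α, 0 * f a = 0
  simp

end FM

/-! ### matrix multiplication collapse and operator identification -/

def matMul (M N : MI → MI → ℤ) : MI → MI → ℤ := fun c a => ∑ b, M c b * N b a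

def cM (K : Type) [Field K] (M : MI → MI → ℤ) : MI → MI → K := fun c a => ((M c a : ℤ) : K)

section OpId
variable {K : Type} [Field K]

lemma cM_matMul (M N : MI → MI → ℤ) :
    (fun c a => ∑ b, cM K M c b * cM K N b a) = cM K (matMul M N) := by
  funext c a
  simp only [cM, matMul]
  push_cast
  rfl

lemma swp_invol (j : Fin (3-1)) (g : MI) : (g ∘ (swp j)) ∘ (swp j) = g := by
  funext p
  simp [swp, Function.comp, Equiv.swap_apply_self]

lemma swp_flip (j : Fin (3-1)) (a b : MI) : (a = b ∘ (swp j)) ↔ (b = a ∘ (swp j)) := by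
  constructor <;> intro h
  · rw [h, swp_invol]
  · rw [h, swp_invol]

lemma matMul_sL (j : Fin (3-1)) (M : MI → MI → ℤ) : matMul (sZ j) M = matL j M := by
  funext c a
  simp [matMul, sZ, matL, ite_mul, Finset.sum_ite_eq']

lemma matMul_sR (j : Fin (3-1)) (M : MI → MI → ℤ) : matMul M (sZ j) = matR j M := by
  funext c a
  simp only [matMul, sZ, matR, mul_ite, mul_neg, mul_one, mul_zero]
  simp only [swp_flip j a]
  simp [Finset.sum_ite_eq']

lemma sOp_eq (j : Fin (3-1)) : sOp K 2 3 j = funMap K MI MI (cM K (sZ j)) := by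
  unfold sOp
  congr 1
  funext c a
  simp only [cM, sZ, swp, apply_ite (fun z : ℤ => (z : K)), Int.cast_neg, Int.cast_one,
    Int.cast_zero]
  split_ifs <;> simp_all

lemma eOp_eq (j : Fin (3-1)) : eOp K 2 3 j = funMap K MI MI (cM K (eZ j)) := by
  unfold eOp
  congr 1
  funext c a
  simp only [cM, eZ, pj, pj1]
  push_cast
  split_ifs with h1 h2
  · simp_all
  · simp_all
  · simp_all
  · erw [if_neg h1]; simp

end OpId

/-! ### the Brauer algebra `B_3(-4)`: generators, relations, spanning set -/

section Alg
variable (K : Type) [Field K]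

def gA : BrauerAlg K (-(4:K)) 3 := bS K (-(4:K)) 3 0
def gB : BrauerAlg K (-(4:K)) 3 := bS K (-(4:K)) 3 1
def gE : BrauerAlg K (-(4:K)) 3 := bE K (-(4:K)) 3 0
def gF : BrauerAlg K (-(4:K)) 3 := bE K (-(4:K)) 3 1

lemma rAA : gA K * gA K = 1 := by
  have h := RingQuot.mkAlgHom_rel K (BRel.ss (R := K) (x := -(4:K)) (n := 3) 0)
  simp only [map_mul, map_one] at h; exact h

lemma rBB : gB K * gB K = 1 := by
  have h := RingQuot.mkAlgHom_rel K (BRel.ss (R := K) (x := -(4:K)) (n := 3) 1)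
  simp only [map_mul, map_one] at h; exact h

lemma rAE : gA K * gE K = gE K := by
  have h := RingQuot.mkAlgHom_rel K (BRel.se (R := K) (x := -(4:K)) (n := 3) 0)
  simp only [map_mul] at h; exact h

lemma rEA : gE K * gA K = gE K := by
  have h := RingQuot.mkAlgHom_rel K (BRel.es (R := K) (x := -(4:K)) (n := 3) 0)
  simp only [map_mul] at h; exact h

lemma rEE : gE K * gE K = (-(4:K)) • gE K := by
  have h := RingQuot.mkAlgHom_rel K (BRel.ee (R := K) (x := -(4:K)) (n := 3) 0)
  simp only [map_mul, map_smul] at h; exact h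

lemma rBraidBA : gB K * gA K * gB K = gA K * gB K * gA K := by
  have h := RingQuot.mkAlgHom_rel K
    (BRel.braid (R := K) (x := -(4:K)) (n := 3) 0 1 (by norm_num))
  simp only [map_mul] at h
  exact h.symm

lemma rSee : gA K * gF K * gE K = gB K * gE K := by
  have h := RingQuot.mkAlgHom_rel K
    (BRel.see (R := K) (x := -(4:K)) (n := 3) 0 1 (by norm_num))
  simp only [map_mul] at h; exact h

lemma rEes : gF K * gE K * gB K = gF K * gA K := by
  have h := RingQuot.mkAlgHom_rel K
    (BRel.ees (R := K) (x := -(4:K)) (n := 3) 0 1 (by norm_num))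
  simp only [map_mul] at h; exact h

lemma rEFE : gE K * gF K * gE K = gE K := by
  have h := RingQuot.mkAlgHom_rel K
    (BRel.eje (R := K) (x := -(4:K)) (n := 3) 0 1 (by norm_num))
  simp only [map_mul] at h; exact h

lemma rEBE : gE K * gB K * gE K = gE K := by
  have h : gB K * gE K = gA K * gF K * gE K := (rSee K).symm
  calc gE K * gB K * gE K = gE K * (gB K * gE K) := by rw [mul_assoc]
    _ = gE K * (gA K * gF K * gE K) := by rw [h]
    _ = gE K * gA K * gF K * gE K := by noncomm_ring
    _ = gE K * gF K * gE K := by rw [rEA]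
    _ = gE K := rEFE K

lemma f_eq : gF K = gA K * gB K * gE K * gB K * gA K := by
  have h1 : gF K * gE K = gA K * (gB K * gE K) := by
    calc gF K * gE K = gA K * (gA K * gF K * gE K) := by
          rw [← one_mul (gF K * gE K), ← rAA K]; noncomm_ring
      _ = gA K * (gB K * gE K) := by rw [rSee]
  calc gF K = gF K * gA K * gA K := by rw [mul_assoc, rAA, mul_one]
    _ = gF K * gE K * gB K * gA K := by rw [rEes]
    _ = gA K * (gB K * gE K) * gB K * gA K := by rw [h1]
    _ = gA K * gB K * gE K * gB K * gA K := by noncomm_ring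

/-- contextualized versions of the relations, for rewriting inside
left-associated words -/
lemma rAA' (w : BrauerAlg K (-(4:K)) 3) : w * gA K * gA K = w := by
  rw [mul_assoc, rAA, mul_one]
lemma rBB' (w : BrauerAlg K (-(4:K)) 3) : w * gB K * gB K = w := by
  rw [mul_assoc, rBB, mul_one]
lemma rAE' (w : BrauerAlg K (-(4:K)) 3) : w * gA K * gE K = w * gE K := by
  rw [mul_assoc, rAE]
lemma rEA' (w : BrauerAlg K (-(4:K)) 3) : w * gE K * gA K = w * gE K := by
  rw [mul_assoc, rEA]
lemma rBraidBA' (w : BrauerAlg K (-(4:K)) 3) :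
    w * gB K * gA K * gB K = w * gA K * gB K * gA K := by
  simp only [mul_assoc]
  congr 1
  simp only [← mul_assoc]
  exact rBraidBA K
lemma rEBE' (w : BrauerAlg K (-(4:K)) 3) : w * gE K * gB K * gE K = w * gE K := by
  simp only [mul_assoc]
  congr 1
  simp only [← mul_assoc]
  exact rEBE K
lemma rEE' (w : BrauerAlg K (-(4:K)) 3) :
    w * gE K * gE K = (-(4:K)) • (w * gE K) := by
  rw [mul_assoc, rEE, mul_smul_comm]

/-- the 15 words giving the diagram basis of `B_3(-4)` -/
def bw : Fin 15 → BrauerAlg K (-(4:K)) 3 :=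
  ![1, gA K, gB K, gA K * gB K, gB K * gA K, gA K * gB K * gA K,
    gE K, gE K * gB K, gE K * gB K * gA K, gB K * gE K, gB K * gE K * gB K,
    gB K * gE K * gB K * gA K, gA K * gB K * gE K, gA K * gB K * gE K * gB K,
    gA K * gB K * gE K * gB K * gA K]

def sp : Submodule K (BrauerAlg K (-(4:K)) 3) := Submodule.span K (Set.range (bw K))

lemma bw_mem (i : Fin 15) : bw K i ∈ sp K := Submodule.subset_span ⟨i, rfl⟩

end Alg

/-! ### images of the 15 basis words under `φ` -/

section Words
variable {K : Type} [Field K]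
  (φ : (BrauerAlg K (-(4 : K)) 3)ᵐᵒᵖ →ₐ[K] Module.End K (Ten K 2 3))
  (hs : ∀ i, φ (op (bS K (-(4 : K)) 3 i)) = sOp K 2 3 i)
  (he : ∀ i, φ (op (bE K (-(4 : K)) 3 i)) = eOp K 2 3 i)

include hs in
lemma hSm (j : Fin 2) : φ (op (bS K (-(4:K)) 3 j)) = funMap K MI MI (cM K (sZ j)) :=
  (hs j).trans (sOp_eq j)

include he in
lemma hEm (j : Fin 2) : φ (op (bE K (-(4:K)) 3 j)) = funMap K MI MI (cM K (eZ j)) :=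
  (he j).trans (eOp_eq j)

include hs in
/-- append `s_j` on the right of a word -/
lemma stepS (w : BrauerAlg K (-(4:K)) 3) (Mw : MI → MI → ℤ) (j : Fin 2)
    (hw : φ (op w) = funMap K MI MI (cM K Mw)) :
    φ (op (w * bS K (-(4:K)) 3 j)) = funMap K MI MI (cM K (matL j Mw)) := by
  rw [op_mul, map_mul, hSm φ hs j, hw, Module.End.mul_eq_comp, funMap_comp,
    cM_matMul, matMul_sL]

include hs in
/-- prepend `s_j` on the left of a word -/
lemma stepSL (w : BrauerAlg K (-(4:K)) 3) (Mw : MI → MI → ℤ) (j : Fin 2)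
    (hw : φ (op w) = funMap K MI MI (cM K Mw)) :
    φ (op (bS K (-(4:K)) 3 j * w)) = funMap K MI MI (cM K (matR j Mw)) := by
  rw [op_mul, map_mul, hw, hSm φ hs j, Module.End.mul_eq_comp, funMap_comp,
    cM_matMul, matMul_sR]

lemma funMap_cM_idZ : funMap K MI MI (cM K idZ) = 1 := by
  apply LinearMap.ext; intro f; funext c
  show ∑ a, cM K idZ c a * f a = f c
  simp [cM, idZ, apply_ite (fun z : ℤ => (z : K)), ite_mul, Finset.sum_ite_eq']

include hs he in
lemma Wlem : ∀ i : Fin 15, φ (op (bw K i)) = funMap K MI MI (cM K (Wz i)) := by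
  have w0 : φ (op (1 : BrauerAlg K (-(4:K)) 3)) = funMap K MI MI (cM K idZ) := by
    rw [op_one, map_one, funMap_cM_idZ]
  have w1 : φ (op (gA K)) = funMap K MI MI (cM K (sZ 0)) := hSm φ hs 0
  have w2 : φ (op (gB K)) = funMap K MI MI (cM K (sZ 1)) := hSm φ hs 1
  have w3 := stepS φ hs (gA K) (sZ 0) 1 w1
  have w4 := stepS φ hs (gB K) (sZ 1) 0 w2
  have w5 := stepS φ hs (gA K * gB K) _ 0 w3
  have w6 : φ (op (gE K)) = funMap K MI MI (cM K (eZ 0)) := hEm φ he 0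
  have w7 := stepS φ hs (gE K) (eZ 0) 1 w6
  have w8 := stepS φ hs (gE K * gB K) _ 0 w7
  have w9 := stepSL φ hs (gE K) (eZ 0) 1 w6
  have w10 := stepS φ hs (gB K * gE K) _ 1 w9
  have w11 := stepS φ hs (gB K * gE K * gB K) _ 0 w10
  have w12 : φ (op (gA K * gB K * gE K))
      = funMap K MI MI (cM K (matR 0 (matR 1 (eZ 0)))) := by
    rw [mul_assoc]
    exact stepSL φ hs (gB K * gE K) _ 0 w9
  have w13 := stepS φ hs (gA K * gB K * gE K) _ 1 w12
  have w14 := stepS φ hs (gA K * gB K * gE K * gB K) _ 0 w13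
  intro i
  fin_cases i
  · exact w0
  · exact w1
  · exact w2
  · exact w3
  · exact w4
  · exact w5
  · exact w6
  · exact w7
  · exact w8
  · exact w9
  · exact w10
  · exact w11
  · exact w12
  · exact w13
  · exact w14

end Words

/-! ### the 15 words span `B_3(-4)` -/

section Span
variable (K : Type) [Field K]

lemma mulA_bw : ∀ i : Fin 15, gA K * bw K i ∈ sp K := by
  intro i
  fin_cases i
  · show gA K * 1 ∈ sp K
    rw [mul_one]; exact bw_mem K 1
  · show gA K * gA K ∈ sp K
    rw [rAA]; exact bw_mem K 0
  · show gA K * gB K ∈ sp K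
    exact bw_mem K 3
  · show gA K * (gA K * gB K) ∈ sp K
    simp only [← mul_assoc, rAA, one_mul]; exact bw_mem K 2
  · show gA K * (gB K * gA K) ∈ sp K
    simp only [← mul_assoc]; exact bw_mem K 5
  · show gA K * (gA K * gB K * gA K) ∈ sp K
    simp only [← mul_assoc, rAA, one_mul]; exact bw_mem K 4
  · show gA K * gE K ∈ sp K
    rw [rAE]; exact bw_mem K 6
  · show gA K * (gE K * gB K) ∈ sp K
    simp only [← mul_assoc, rAE]; exact bw_mem K 7
  · show gA K * (gE K * gB K * gA K) ∈ sp K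
    simp only [← mul_assoc, rAE]; exact bw_mem K 8
  · show gA K * (gB K * gE K) ∈ sp K
    simp only [← mul_assoc]; exact bw_mem K 12
  · show gA K * (gB K * gE K * gB K) ∈ sp K
    simp only [← mul_assoc]; exact bw_mem K 13
  · show gA K * (gB K * gE K * gB K * gA K) ∈ sp K
    simp only [← mul_assoc]; exact bw_mem K 14
  · show gA K * (gA K * gB K * gE K) ∈ sp K
    simp only [← mul_assoc, rAA, one_mul]; exact bw_mem K 9
  · show gA K * (gA K * gB K * gE K * gB K) ∈ sp K
    simp only [← mul_assoc, rAA, one_mul]; exact bw_mem K 10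
  · show gA K * (gA K * gB K * gE K * gB K * gA K) ∈ sp K
    simp only [← mul_assoc, rAA, one_mul]; exact bw_mem K 11

lemma mulB_bw : ∀ i : Fin 15, gB K * bw K i ∈ sp K := by
  intro i
  fin_cases i
  · show gB K * 1 ∈ sp K
    rw [mul_one]; exact bw_mem K 2
  · show gB K * gA K ∈ sp K
    exact bw_mem K 4
  · show gB K * gB K ∈ sp K
    rw [rBB]; exact bw_mem K 0
  · show gB K * (gA K * gB K) ∈ sp K
    simp only [← mul_assoc, rBraidBA]; exact bw_mem K 5
  · show gB K * (gB K * gA K) ∈ sp K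
    simp only [← mul_assoc, rBB, one_mul]; exact bw_mem K 1
  · show gB K * (gA K * gB K * gA K) ∈ sp K
    simp only [← mul_assoc, rBraidBA, rAA', rAA]; exact bw_mem K 3
  · show gB K * gE K ∈ sp K
    exact bw_mem K 9
  · show gB K * (gE K * gB K) ∈ sp K
    simp only [← mul_assoc]; exact bw_mem K 10
  · show gB K * (gE K * gB K * gA K) ∈ sp K
    simp only [← mul_assoc]; exact bw_mem K 11
  · show gB K * (gB K * gE K) ∈ sp K
    simp only [← mul_assoc, rBB, one_mul]; exact bw_mem K 6
  · show gB K * (gB K * gE K * gB K) ∈ sp K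
    simp only [← mul_assoc, rBB, one_mul]; exact bw_mem K 7
  · show gB K * (gB K * gE K * gB K * gA K) ∈ sp K
    simp only [← mul_assoc, rBB, one_mul]; exact bw_mem K 8
  · show gB K * (gA K * gB K * gE K) ∈ sp K
    simp only [← mul_assoc, rBraidBA, rAE']; exact bw_mem K 12
  · show gB K * (gA K * gB K * gE K * gB K) ∈ sp K
    simp only [← mul_assoc, rBraidBA, rAE']; exact bw_mem K 13
  · show gB K * (gA K * gB K * gE K * gB K * gA K) ∈ sp K
    simp only [← mul_assoc, rBraidBA, rAE']; exact bw_mem K 14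

lemma mulE_bw : ∀ i : Fin 15, gE K * bw K i ∈ sp K := by
  intro i
  fin_cases i
  · show gE K * 1 ∈ sp K
    rw [mul_one]; exact bw_mem K 6
  · show gE K * gA K ∈ sp K
    rw [rEA]; exact bw_mem K 6
  · show gE K * gB K ∈ sp K
    exact bw_mem K 7
  · show gE K * (gA K * gB K) ∈ sp K
    simp only [← mul_assoc, rEA]; exact bw_mem K 7
  · show gE K * (gB K * gA K) ∈ sp K
    simp only [← mul_assoc]; exact bw_mem K 8
  · show gE K * (gA K * gB K * gA K) ∈ sp K
    simp only [← mul_assoc, rEA]; exact bw_mem K 8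
  · show gE K * gE K ∈ sp K
    rw [rEE]; exact Submodule.smul_mem _ _ (bw_mem K 6)
  · show gE K * (gE K * gB K) ∈ sp K
    simp only [← mul_assoc, rEE, smul_mul_assoc]
    exact Submodule.smul_mem _ _ (bw_mem K 7)
  · show gE K * (gE K * gB K * gA K) ∈ sp K
    simp only [← mul_assoc, rEE, smul_mul_assoc]
    exact Submodule.smul_mem _ _ (bw_mem K 8)
  · show gE K * (gB K * gE K) ∈ sp K
    simp only [← mul_assoc, rEBE]; exact bw_mem K 6
  · show gE K * (gB K * gE K * gB K) ∈ sp K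
    simp only [← mul_assoc, rEBE]; exact bw_mem K 7
  · show gE K * (gB K * gE K * gB K * gA K) ∈ sp K
    simp only [← mul_assoc, rEBE]; exact bw_mem K 8
  · show gE K * (gA K * gB K * gE K) ∈ sp K
    simp only [← mul_assoc, rEA, rEBE]; exact bw_mem K 6
  · show gE K * (gA K * gB K * gE K * gB K) ∈ sp K
    simp only [← mul_assoc, rEA, rEBE]; exact bw_mem K 7
  · show gE K * (gA K * gB K * gE K * gB K * gA K) ∈ sp K
    simp only [← mul_assoc, rEA, rEBE]; exact bw_mem K 8

lemma mulA_sp : ∀ z ∈ sp K, gA K * z ∈ sp K := by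
  intro z hz
  induction hz using Submodule.span_induction with
  | mem w hw => obtain ⟨i, rfl⟩ := hw; exact mulA_bw K i
  | zero => simp
  | add u v _ _ hu hv => rw [mul_add]; exact Submodule.add_mem _ hu hv
  | smul k u _ hu => rw [mul_smul_comm]; exact Submodule.smul_mem _ _ hu

lemma mulB_sp : ∀ z ∈ sp K, gB K * z ∈ sp K := by
  intro z hz
  induction hz using Submodule.span_induction with
  | mem w hw => obtain ⟨i, rfl⟩ := hw; exact mulB_bw K i
  | zero => simp
  | add u v _ _ hu hv => rw [mul_add]; exact Submodule.add_mem _ hu hv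
  | smul k u _ hu => rw [mul_smul_comm]; exact Submodule.smul_mem _ _ hu

lemma mulE_sp : ∀ z ∈ sp K, gE K * z ∈ sp K := by
  intro z hz
  induction hz using Submodule.span_induction with
  | mem w hw => obtain ⟨i, rfl⟩ := hw; exact mulE_bw K i
  | zero => simp
  | add u v _ _ hu hv => rw [mul_add]; exact Submodule.add_mem _ hu hv
  | smul k u _ hu => rw [mul_smul_comm]; exact Submodule.smul_mem _ _ hu

lemma mulF_sp : ∀ z ∈ sp K, gF K * z ∈ sp K := by
  intro z hz
  rw [f_eq K]
  simp only [mul_assoc]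
  exact mulA_sp K _ (mulB_sp K _ (mulE_sp K _ (mulB_sp K _ (mulA_sp K _ hz))))

lemma mem_sp (y : BrauerAlg K (-(4:K)) 3) : y ∈ sp K := by
  obtain ⟨x, rfl⟩ := RingQuot.mkAlgHom_surjective K (BRel K (-(4:K)) 3) y
  have main : ∀ z ∈ sp K,
      RingQuot.mkAlgHom K (BRel K (-(4:K)) 3) x * z ∈ sp K := by
    induction x using FreeAlgebra.induction with
    | grade0 r =>
      intro z hz
      rw [AlgHom.commutes, ← Algebra.smul_def]
      exact Submodule.smul_mem _ _ hz
    | grade1 g =>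
      cases g with
      | s i =>
        fin_cases i
        · exact fun z hz => mulA_sp K z hz
        · exact fun z hz => mulB_sp K z hz
      | e i =>
        fin_cases i
        · exact fun z hz => mulE_sp K z hz
        · exact fun z hz => mulF_sp K z hz
    | mul u v hu hv =>
      intro z hz
      rw [map_mul, mul_assoc]
      exact hu _ (hv z hz)
    | add u v hu hv =>
      intro z hz
      rw [map_add, add_mul]
      exact Submodule.add_mem _ (hu z hz) (hv z hz)
  have h1 : (1 : BrauerAlg K (-(4:K)) 3) ∈ sp K := bw_mem K 0
  simpa using main 1 h1

end Span

/-! ### value vectors of the word matrices at selected entries -/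

section Pairs

lemma v1 : ∀ i : Fin 15, Wz i ![0,0,1] ![0,0,1]
    = (if i = 0 then 1 else 0) + (if i = 1 then -1 else 0) := by decide
lemma v2 : ∀ i : Fin 15, Wz i ![0,1,0] ![0,0,1]
    = (if i = 3 then 1 else 0) + (if i = 2 then -1 else 0) := by decide
lemma v3 : ∀ i : Fin 15, Wz i ![1,0,0] ![0,0,1]
    = (if i = 4 then 1 else 0) + (if i = 5 then -1 else 0) := by decide
lemma v4 : ∀ i : Fin 15, Wz i ![0,1,1] ![0,1,1]
    = (if i = 0 then 1 else 0) + (if i = 2 then -1 else 0) := by decide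
lemma v5 : ∀ i : Fin 15, Wz i ![0,1,0] ![0,1,0]
    = (if i = 0 then 1 else 0) + (if i = 5 then -1 else 0) := by decide
lemma v6 : ∀ i : Fin 15, Wz i ![0,1,2] ![0,1,2]
    = (if i = 0 then 1 else 0) + (if i = 14 then -1 else 0) := by decide
lemma v7 : ∀ i : Fin 15, Wz i ![0,1,3] ![0,1,3]
    = (if i = 0 then 1 else 0) + (if i = 10 then -1 else 0) := by decide
lemma v8 : ∀ i : Fin 15, Wz i ![0,3,1] ![0,3,1]
    = (if i = 0 then 1 else 0) + (if i = 6 then -1 else 0) := by decide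
lemma v9 : ∀ i : Fin 15, Wz i ![0,0,3] ![0,1,2]
    = (if i = 13 then 1 else 0) + (if i = 14 then -1 else 0) := by decide
lemma v10 : ∀ i : Fin 15, Wz i ![0,3,0] ![0,1,2]
    = (if i = 14 then 1 else 0) + (if i = 12 then -1 else 0) := by decide
lemma v11 : ∀ i : Fin 15, Wz i ![1,2,0] ![0,0,3]
    = (if i = 9 then 1 else 0) + (if i = 12 then -1 else 0) := by decide
lemma v12 : ∀ i : Fin 15, Wz i ![0,1,2] ![0,0,3]
    = (if i = 11 then 1 else 0) + (if i = 14 then -1 else 0) := by decide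
lemma v13 : ∀ i : Fin 15, Wz i ![2,1,1] ![0,3,1]
    = (if i = 6 then 1 else 0) + (if i = 7 then -1 else 0) := by decide
lemma v14 : ∀ i : Fin 15, Wz i ![0,1,2] ![0,3,0]
    = (if i = 14 then 1 else 0) + (if i = 8 then -1 else 0) := by decide

/-- from a two-term column of the coefficient matrix, extract an equality of
coefficients -/
lemma pairEq {K : Type} [Field K] (c : Fin 15 → K) (i0 i1 : Fin 15) (v : Fin 15 → ℤ)
    (hv : ∀ i, v i = (if i = i0 then 1 else 0) + (if i = i1 then -1 else 0))
    (h : (∑ i : Fin 15, c i * ((v i : ℤ) : K)) = 0) : c i0 = c i1 := by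
  simp only [hv, Int.cast_add, apply_ite (fun z : ℤ => (z : K)), Int.cast_one,
    Int.cast_neg, Int.cast_zero, mul_add, mul_ite, mul_one, mul_zero, mul_neg,
    Finset.sum_add_distrib, Finset.sum_ite_eq', Finset.mem_univ, if_true] at h
  linear_combination h

end Pairs

section Alpha
variable (K : Type) [Field K]

lemma alpha_eq : alphaElt K = ∑ i : Fin 15, bw K i := by
  simp only [bw, Fin.sum_univ_succ, Fin.sum_univ_zero, Matrix.cons_val_zero,
    Matrix.cons_val_succ, add_zero, alphaElt, gA, gB, gE]
  noncomm_ring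

end Alpha

/-- For `m = 2`, `n = 3` and an infinite field `K`, the element `α` spans
the kernel of `φ : B_3(-4) → End_K(V^{⊗3})`:  `ker(φ) = K·α`. -/
theorem kernel_for_m2_n3
    (K : Type) [Field K] [Infinite K]
    (φ : (BrauerAlg K (-(4 : K)) 3)ᵐᵒᵖ →ₐ[K] Module.End K (Ten K 2 3))
    (hs : ∀ i, φ (op (bS K (-(4 : K)) 3 i)) = sOp K 2 3 i)
    (he : ∀ i, φ (op (bE K (-(4 : K)) 3 i)) = eOp K 2 3 i) :
    φ (op (alphaElt K)) = 0 ∧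
    ∀ y : BrauerAlg K (-(4 : K)) 3,
      φ (op y) = 0 ↔ y ∈ Submodule.span K {alphaElt K} := by
  have Wl := Wlem φ hs he
  have h0 : φ (op (alphaElt K)) = 0 := by
    rw [alpha_eq, Finset.op_sum, map_sum]
    simp only [Wl]
    rw [funMap_sum]
    have hz : (fun c a => ∑ i : Fin 15, cM K (Wz i) c a) = (fun _ _ => (0:K)) := by
      funext c a
      simp only [cM]
      rw [← Int.cast_sum, zfact c a, Int.cast_zero]
    rw [hz, funMap_zero]
  refine ⟨h0, fun y => ⟨fun hy => ?_, fun hy => ?_⟩⟩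
  · -- kernel ⊆ span
    obtain ⟨c, hc⟩ := (Submodule.mem_span_range_iff_exists_fun K).mp (mem_sp K y)
    have key : ∀ p q : MI, (∑ i : Fin 15, c i * ((Wz i p q : ℤ) : K)) = 0 := by
      intro p q
      have h1 : φ (op y) (dta K 2 3 q) p = 0 := by rw [hy]; rfl
      rw [← hc, Finset.op_sum, map_sum] at h1
      simp only [MulOpposite.op_smul, map_smul, Wl, LinearMap.sum_apply,
        LinearMap.smul_apply, funMap_dta, Finset.sum_apply, Pi.smul_apply,
        smul_eq_mul, cM] at h1
      exact h1
    have e1 : c 0 = c 1 := pairEq c 0 1 _ v1 (key ![0,0,1] ![0,0,1])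
    have e2 : c 3 = c 2 := pairEq c 3 2 _ v2 (key ![0,1,0] ![0,0,1])
    have e3 : c 4 = c 5 := pairEq c 4 5 _ v3 (key ![1,0,0] ![0,0,1])
    have e4 : c 0 = c 2 := pairEq c 0 2 _ v4 (key ![0,1,1] ![0,1,1])
    have e5 : c 0 = c 5 := pairEq c 0 5 _ v5 (key ![0,1,0] ![0,1,0])
    have e6 : c 0 = c 14 := pairEq c 0 14 _ v6 (key ![0,1,2] ![0,1,2])
    have e7 : c 0 = c 10 := pairEq c 0 10 _ v7 (key ![0,1,3] ![0,1,3])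
    have e8 : c 0 = c 6 := pairEq c 0 6 _ v8 (key ![0,3,1] ![0,3,1])
    have e9 : c 13 = c 14 := pairEq c 13 14 _ v9 (key ![0,0,3] ![0,1,2])
    have e10 : c 14 = c 12 := pairEq c 14 12 _ v10 (key ![0,3,0] ![0,1,2])
    have e11 : c 9 = c 12 := pairEq c 9 12 _ v11 (key ![1,2,0] ![0,0,3])
    have e12 : c 11 = c 14 := pairEq c 11 14 _ v12 (key ![0,1,2] ![0,0,3])
    have e13 : c 6 = c 7 := pairEq c 6 7 _ v13 (key ![2,1,1] ![0,3,1])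
    have e14 : c 14 = c 8 := pairEq c 14 8 _ v14 (key ![0,1,2] ![0,3,0])
    have h14 : c 14 = c 0 := e6.symm
    have h12 : c 12 = c 0 := e10.symm.trans h14
    have hall : ∀ i : Fin 15, c i = c 0 := by
      intro i
      fin_cases i
      · rfl
      · exact e1.symm
      · exact e4.symm
      · exact e2.trans e4.symm
      · exact e3.trans e5.symm
      · exact e5.symm
      · exact e8.symm
      · exact e13.symm.trans e8.symm
      · exact e14.symm.trans h14
      · exact e11.trans h12
      · exact e7.symm
      · exact e12.trans h14
      · exact h12
      · exact e9.trans h14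
      · exact h14
    have hy' : y = c 0 • alphaElt K := by
      rw [← hc, alpha_eq, Finset.smul_sum]
      exact Finset.sum_congr rfl fun i _ => by rw [hall i]
    exact Submodule.mem_span_singleton.mpr ⟨c 0, hy'.symm⟩
  · -- span ⊆ kernel
    obtain ⟨k, hk⟩ := Submodule.mem_span_singleton.mp hy
    rw [← hk, MulOpposite.op_smul, map_smul, h0, smul_zero]

end SpBrauer
end
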